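/- Let (M,d) be a geodesic proper metric space with base point o, let (x_n)_{n≤0} be a random sequence in M such that P(x_{−n} ∈ K) → 0 as n → ∞ for every bounded set K, and let μ_n = (1/n)∑_{i=1}^n δ_{ξ_{x_{−i}}} be the empirical measures on the horofunction compactification. If ν_n are convex averages of a subsequence of (μ_n) converging weakly a.s. to a random measure μ, then μ gives full mass to the horofunction boundary: for every bounded set K ⊂ M, E[μ({ξ_x : x ∈ K})] = 0. -/

import Mathlib

open Filter Topology MeasureTheory
open scoped ENNReal

/-- The horofunction associated to `x` (base point `o`): `ξ_x(y) = d(x,o) - d(x,y)`,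
as a continuous map `M → ℝ`; via `x ↦ ξ_x` the space `M` embeds in its horofunction
compactification (a subset of `C(M,ℝ)` with the compact-open topology). -/
noncomputable def horo {M : Type*} [MetricSpace M] (o x : M) : C(M, ℝ) :=
  ⟨fun y => dist x o - dist x y, by fun_prop⟩

lemma cesaro0 {u : ℕ → ℝ≥0∞} (hb : ∀ n, u n ≤ 1) (h : Tendsto u atTop (𝓝 0)) :
    Tendsto (fun n : ℕ => (n : ℝ≥0∞)⁻¹ * ∑ i ∈ Finset.range n, u i) atTop (𝓝 0) := by
  rw [ENNReal.tendsto_nhds_zero]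
  intro ε hε
  have half_pos : (0 : ℝ≥0∞) < ε / 2 := ENNReal.half_pos hε.ne'
  obtain ⟨N, hN⟩ := eventually_atTop.mp (ENNReal.tendsto_nhds_zero.mp h (ε / 2) half_pos)
  have hinv : Tendsto (fun n : ℕ => ((n : ℝ≥0∞))⁻¹ * N) atTop (𝓝 0) := by
    simpa using ENNReal.Tendsto.mul_const ENNReal.tendsto_inv_nat_nhds_zero
      (Or.inr (by simp : (N : ℝ≥0∞) ≠ ∞))
  filter_upwards [eventually_atTop.mpr ⟨N, fun n hn => hn⟩,
    ENNReal.tendsto_nhds_zero.mp hinv (ε / 2) half_pos] with n hn1 hn2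
  rcases Nat.eq_zero_or_pos n with rfl | hnpos
  · simp
  have hn0 : ((n : ℝ≥0∞)) ≠ 0 := by exact_mod_cast Nat.cast_ne_zero.mpr hnpos.ne'
  have hsum : ∑ i ∈ Finset.range n, u i ≤ (N : ℝ≥0∞) + (n : ℝ≥0∞) * (ε / 2) := by
    rw [← Finset.sum_range_add_sum_Ico _ hn1]
    gcongr with i hi
    · calc ∑ i ∈ Finset.range N, u i ≤ ∑ _i ∈ Finset.range N, 1 :=
            Finset.sum_le_sum fun i _ => hb i
        _ = (N : ℝ≥0∞) := by simp
    · calc ∑ i ∈ Finset.Ico N n, u i ≤ ∑ _i ∈ Finset.Ico N n, (ε / 2) :=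
            Finset.sum_le_sum fun i hi => hN i (Finset.mem_Ico.mp hi).1
        _ = ((n - N : ℕ) : ℝ≥0∞) * (ε / 2) := by simp [Nat.card_Ico, mul_comm]
        _ ≤ (n : ℝ≥0∞) * (ε / 2) := by gcongr; exact_mod_cast Nat.sub_le n N
  calc (n : ℝ≥0∞)⁻¹ * ∑ i ∈ Finset.range n, u i
      ≤ (n : ℝ≥0∞)⁻¹ * ((N : ℝ≥0∞) + (n : ℝ≥0∞) * (ε / 2)) := mul_le_mul_right hsum _
    _ = (n : ℝ≥0∞)⁻¹ * N + ((n : ℝ≥0∞)⁻¹ * (n : ℝ≥0∞)) * (ε / 2) := by ring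
    _ ≤ ε / 2 + ε / 2 := by
        refine add_le_add hn2 ?_
        rw [ENNReal.inv_mul_cancel hn0 (ENNReal.natCast_ne_top n), one_mul]
    _ = ε := ENNReal.add_halves ε


/-- Let `(M,d)` be a geodesic proper metric space with base point `o`,
`(x_{-i})_{i≥1}` a random sequence in `M` with `P(x_{-i} ∈ K) → 0` for every bounded `K`,
and `μ_n = (1/n) ∑_{i=1}^n δ_{ξ_{x_{-i}}}` the empirical measures on the horofunction
compactification (inside `C(M,ℝ)`).  If `ν_k = (1/k) ∑_{j=1}^k μ_{n_j}` are convex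
averages of a subsequence of `(μ_n)` converging weakly a.s. to a random measure `μ`,
then `μ` gives full mass to the horofunction boundary: `E[μ({ξ_z : z ∈ K})] = 0` for
every bounded `K ⊆ M`. -/
theorem stmt16 {Ω : Type*} [MeasurableSpace Ω] (P : Measure Ω) [IsProbabilityMeasure P]
    {M : Type*} [MetricSpace M] [ProperSpace M]
    [MeasurableSpace C(M, ℝ)] [BorelSpace C(M, ℝ)]
    (hgeo : ∀ a b : M, ∀ t : ℝ, 0 ≤ t → t ≤ dist a b →
      ∃ z : M, dist a z = t ∧ dist z b = dist a b - t)
    (o : M) (x : ℕ → Ω → M)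
    (hx : ∀ K : Set M, Bornology.IsBounded K →
      Tendsto (fun n => P {ω | x n ω ∈ K}) atTop (𝓝 0))
    (ns : ℕ → ℕ) (hns : StrictMono ns) (hns1 : ∀ j, 1 ≤ ns j)
    (emp : ℕ → Ω → Measure C(M, ℝ))
    (hemp : ∀ n ω, emp n ω
      = ((n : ℝ≥0∞))⁻¹ • ∑ i ∈ Finset.Icc 1 n, Measure.dirac (horo o (x i ω)))
    (ν : ℕ → Ω → Measure C(M, ℝ))
    (hν : ∀ k ω, ν k ω = ((k : ℝ≥0∞))⁻¹ • ∑ j ∈ Finset.range k, emp (ns j) ω)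
    (μ : Ω → Measure C(M, ℝ)) (hμprob : ∀ ω, IsProbabilityMeasure (μ ω))
    (hconv : ∀ᵐ ω ∂P, ∀ f : BoundedContinuousFunction C(M, ℝ) ℝ,
      Tendsto (fun k : ℕ => ∫ ξ, f ξ ∂(ν k ω)) atTop (𝓝 (∫ ξ, f ξ ∂(μ ω)))) :
    ∀ K : Set M, Bornology.IsBounded K →
      ∫⁻ ω, μ ω ((fun z => horo o z) '' K) ∂P = 0 := by
  intro K hK
  obtain ⟨R, hR⟩ := hK.subset_closedBall o
  set R' : ℝ := max R 0 with hR'def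
  have hR0 : 0 ≤ R' := le_max_right _ _
  have hKR : K ⊆ Metric.closedBall o R' :=
    hR.trans (Metric.closedBall_subset_closedBall (le_max_left _ _))
  set r : ℝ := R' + 2 with hrdef
  set U : Set C(M, ℝ) := {f | Set.MapsTo f (Metric.closedBall o r) (Set.Iio (R' + 1))}
    with hUdef
  have hUopen : IsOpen U :=
    ContinuousMap.isOpen_setOf_mapsTo (isCompact_closedBall o r) isOpen_Iio
  have hUmeas : MeasurableSet U := hUopen.measurableSet
  -- image of K is in U
  have himg : (fun z => horo o z) '' K ⊆ U := by
    rintro _ ⟨z, hz, rfl⟩ y hy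
    have h1 : dist z o ≤ R' := Metric.mem_closedBall.mp (hKR hz)
    have h2 : (0 : ℝ) ≤ dist z y := dist_nonneg
    show dist z o - dist z y < R' + 1
    linarith
  -- preimage of U is bounded
  have hpre : ∀ w : M, horo o w ∈ U → w ∈ Metric.closedBall o r := by
    intro w hw
    by_contra hcon
    have hd : r ≤ dist o w := by
      rw [Metric.mem_closedBall, dist_comm] at hcon
      exact (not_le.mp hcon).le
    obtain ⟨z, hz1, hz2⟩ := hgeo o w r (by positivity) hd
    have hzball : z ∈ Metric.closedBall o r := by
      rw [Metric.mem_closedBall, dist_comm, hz1]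
    have hlt : dist w o - dist w z < R' + 1 := hw hzball
    rw [dist_comm w o, dist_comm w z, hz2] at hlt
    simp only [hrdef] at hlt
    linarith
  -- the probabilistic sets
  set S : ℕ → Set Ω := fun i => {ω | x i ω ∈ Metric.closedBall o r} with hSdef
  set T : ℕ → Set Ω := fun i => toMeasurable P (S i) with hTdef
  have hTmeas : ∀ i, MeasurableSet (T i) := fun i => measurableSet_toMeasurable P (S i)
  set u : ℕ → ℝ≥0∞ := fun i => P (S i) with hudef
  have hPT : ∀ i, P (T i) = u i := fun i => measure_toMeasurable (S i)
  have hu1 : ∀ i, u i ≤ 1 := fun i => prob_le_one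
  have hu0 : Tendsto u atTop (𝓝 0) := hx _ Metric.isBounded_closedBall
  -- dominating measurable functions
  set g : ℕ → Ω → ℝ≥0∞ := fun k ω =>
    (((k + 1 : ℕ)) : ℝ≥0∞)⁻¹ * ∑ j ∈ Finset.range (k + 1),
      ((ns j : ℝ≥0∞))⁻¹ * ∑ i ∈ Finset.Icc 1 (ns j), (T i).indicator 1 ω with hgdef
  have hgmeas : ∀ k, Measurable (g k) := by
    intro k
    apply Measurable.const_mul
    apply Finset.measurable_sum
    intro j _
    apply Measurable.const_mul
    apply Finset.measurable_sum
    intro i _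
    exact measurable_one.indicator (hTmeas i)
  -- pointwise bound ν (k+1) ω U ≤ g k ω
  have hbound : ∀ k ω, ν (k + 1) ω U ≤ g k ω := by
    intro k ω
    rw [hν, Measure.smul_apply, Measure.finset_sum_apply, smul_eq_mul]
    refine mul_le_mul_right (Finset.sum_le_sum fun j _ => ?_) _
    rw [hemp, Measure.smul_apply, Measure.finset_sum_apply, smul_eq_mul]
    refine mul_le_mul_right (Finset.sum_le_sum fun i _ => ?_) _
    rw [Measure.dirac_apply' _ hUmeas]
    by_cases hmem : horo o (x i ω) ∈ U
    · have hωT : ω ∈ T i := subset_toMeasurable P (S i) (hpre _ hmem)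
      simp [Set.indicator_of_mem hmem, Set.indicator_of_mem hωT]
    · simp [Set.indicator_of_notMem hmem]
  -- probability measures
  have hempuniv : ∀ n, 1 ≤ n → ∀ ω, emp n ω Set.univ = 1 := by
    intro n hn ω
    rw [hemp, Measure.smul_apply, Measure.finset_sum_apply, smul_eq_mul]
    simp only [measure_univ, Finset.sum_const, Nat.card_Icc, Nat.add_sub_cancel, smul_eq_mul,
      mul_one]
    rw [nsmul_eq_mul, mul_one]
    exact ENNReal.inv_mul_cancel (Nat.cast_ne_zero.mpr (by omega))
      (ENNReal.natCast_ne_top n)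
  have hνprob : ∀ k ω, IsProbabilityMeasure (ν (k + 1) ω) := by
    intro k ω
    constructor
    rw [hν, Measure.smul_apply, Measure.finset_sum_apply, smul_eq_mul]
    rw [Finset.sum_congr rfl fun j _ => hempuniv (ns j) (hns1 j) ω]
    simp only [Finset.sum_const, Finset.card_range, smul_eq_mul, mul_one]
    rw [nsmul_eq_mul, mul_one]
    exact ENNReal.inv_mul_cancel (Nat.cast_ne_zero.mpr (Nat.succ_ne_zero k))
      (ENNReal.natCast_ne_top _)
  -- a.e. portmanteau bound
  have hae : ∀ᵐ ω ∂P,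
      μ ω ((fun z => horo o z) '' K) ≤ atTop.liminf (fun k => g k ω) := by
    filter_upwards [hconv] with ω hω
    haveI := hμprob ω
    haveI : ∀ k : ℕ, IsProbabilityMeasure ((fun k => ν (k + 1) ω) k) := fun k => hνprob k ω
    let νF : ℕ → FiniteMeasure C(M, ℝ) := fun k => ⟨ν (k + 1) ω, by haveI := hνprob k ω; infer_instance⟩
    let μF : FiniteMeasure C(M, ℝ) := ⟨μ ω, by haveI := hμprob ω; infer_instance⟩
    have hT' : Tendsto νF atTop (𝓝 μF) :=
      FiniteMeasure.tendsto_iff_forall_integral_tendsto.mpr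
        (fun f => (hω f).comp (tendsto_add_atTop_nat 1))
    have hport : μ ω U ≤ atTop.liminf (fun k => ν (k + 1) ω U) :=
      le_measure_liminf_of_limsup_measure_compl_le (μs := fun k => ν (k + 1) ω) hUmeas
        (FiniteMeasure.limsup_measure_closed_le_of_tendsto hT' hUopen.isClosed_compl)
    calc μ ω ((fun z => horo o z) '' K) ≤ μ ω U := measure_mono himg
      _ ≤ atTop.liminf (fun k => ν (k + 1) ω U) := hport
      _ ≤ atTop.liminf (fun k => g k ω) :=
          liminf_le_liminf (.of_forall fun k => hbound k ω)
  -- integrals of g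
  set a : ℕ → ℝ≥0∞ := fun n => (n : ℝ≥0∞)⁻¹ * ∑ i ∈ Finset.Icc 1 n, u i with hadef
  have hgint : ∀ k, ∫⁻ ω, g k ω ∂P
      = (((k + 1 : ℕ)) : ℝ≥0∞)⁻¹ * ∑ j ∈ Finset.range (k + 1), a (ns j) := by
    intro k
    rw [hgdef]
    rw [lintegral_const_mul' _ _ (ENNReal.inv_ne_top.mpr (by exact_mod_cast Nat.succ_ne_zero k))]
    congr 1
    rw [lintegral_finset_sum _ (fun j _ => by
      apply Measurable.const_mul
      exact Finset.measurable_sum _ fun i _ => measurable_one.indicator (hTmeas i))]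
    refine Finset.sum_congr rfl fun j _ => ?_
    rw [lintegral_const_mul' _ _ (ENNReal.inv_ne_top.mpr
      (Nat.cast_ne_zero.mpr (by have := hns1 j; omega)))]
    congr 1
    rw [lintegral_finset_sum _ (fun i _ => measurable_one.indicator (hTmeas i))]
    exact Finset.sum_congr rfl fun i _ => by
      rw [lintegral_indicator_one (hTmeas i), hPT i]
  -- a n → 0 and a n ≤ 1
  have ha0 : Tendsto a atTop (𝓝 0) := by
    have h1 : Tendsto (fun i => u (1 + i)) atTop (𝓝 0) := by
      have := hu0.comp (tendsto_add_atTop_nat 1)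
      simpa [Function.comp_def, Nat.add_comm] using this
    have h2 := cesaro0 (u := fun i => u (1 + i)) (fun i => hu1 _) h1
    have heq : ∀ n, a n = (n : ℝ≥0∞)⁻¹ * ∑ i ∈ Finset.range n, u (1 + i) := by
      intro n
      show (n : ℝ≥0∞)⁻¹ * ∑ i ∈ Finset.Icc 1 n, u i = _
      congr 1
      rw [← Finset.Ico_add_one_right_eq_Icc, Finset.sum_Ico_eq_sum_range]
      simp
    simpa [← heq] using h2
  have ha1 : ∀ n, a n ≤ 1 := by
    intro n
    rcases Nat.eq_zero_or_pos n with rfl | hn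
    · simp [hadef]
    calc a n ≤ (n : ℝ≥0∞)⁻¹ * ∑ _i ∈ Finset.Icc 1 n, 1 :=
          mul_le_mul_right (Finset.sum_le_sum fun i _ => hu1 i) _
      _ = (n : ℝ≥0∞)⁻¹ * n := by simp
      _ = 1 := ENNReal.inv_mul_cancel (by exact_mod_cast hn.ne') (ENNReal.natCast_ne_top n)
  -- conclusion: c k → 0
  have hc0 : Tendsto (fun k => ∫⁻ ω, g k ω ∂P) atTop (𝓝 0) := by
    have h1 : Tendsto (fun j => a (ns j)) atTop (𝓝 0) := ha0.comp hns.tendsto_atTop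
    have h2 := cesaro0 (u := fun j => a (ns j)) (fun j => ha1 _) h1
    have h3 := h2.comp (tendsto_add_atTop_nat 1)
    simp only [Function.comp_def] at h3
    convert h3 using 2 with k
    rw [hgint k]
  have hfinal : ∫⁻ ω, μ ω ((fun z => horo o z) '' K) ∂P ≤ 0 := by
    calc ∫⁻ ω, μ ω ((fun z => horo o z) '' K) ∂P
        ≤ ∫⁻ ω, atTop.liminf (fun k => g k ω) ∂P := lintegral_mono_ae hae
      _ ≤ atTop.liminf (fun k => ∫⁻ ω, g k ω ∂P) := lintegral_liminf_le hgmeas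
      _ = 0 := hc0.liminf_eq
  exact le_antisymm hfinal zero_le
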